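/- arXiv:2105.10972 — 5 statements merged into one kernel-verified Lean document; each statement's English description precedes it below -/
import Mathlib

section
/- Let R be a commutative ring with 1, let T ⊆ SL₂(R), x₁, x₂ ∈ R and k₁, k₂ ∈ ℕ. Assume C(x₁) ∈ B_T(k₁) and C(x₂) ∈ B_T(k₂). Then C(x₁ + x₂) ∈ B_T(k₁ + k₂). -/
open Matrix

abbrev SL2 (R : Type*) [CommRing R] := Matrix.SpecialLinearGroup (Fin 2) R

/-- The elementary matrix with `x` in the upper-right entry. -/
def E12 {R : Type*} [CommRing R] (x : R) : SL2 R :=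
  ⟨!![1, x; 0, 1], by simp [Matrix.det_fin_two_of]⟩

/-- The elementary matrix with `x` in the lower-left entry. -/
def E21 {R : Type*} [CommRing R] (x : R) : SL2 R :=
  ⟨!![1, 0; x, 1], by simp [Matrix.det_fin_two_of]⟩

/-- The self-reproducing element `C(x) = E21(x) * E12(x)`. -/
def Csr {R : Type*} [CommRing R] (x : R) : SL2 R := E21 x * E12 x

/-- The set of conjugates of elements of `T` or of their inverses. -/
def conjSet {G : Type*} [Group G] (T : Set G) : Set G :=
  {g | ∃ A ∈ T, ∃ x : G, g = x⁻¹ * A * x ∨ g = x⁻¹ * A⁻¹ * x}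

/-- `BT T k` is the set of products of at most `k` elements, each of which is conjugate to
some `A ∈ T` or its inverse; the empty product gives `1 ∈ BT T k`. -/
def BT {G : Type*} [Group G] (T : Set G) (k : ℕ) : Set G :=
  {g | ∃ l : List G, l.length ≤ k ∧ (∀ a ∈ l, a ∈ conjSet T) ∧ l.prod = g}

lemma E21_mul {R : Type*} [CommRing R] (a b : R) : E21 a * E21 b = E21 (a + b) := by
  ext i j
  rw [Matrix.SpecialLinearGroup.coe_mul]
  fin_cases i <;> fin_cases j <;>
    simp [E21, Matrix.mul_apply, Fin.sum_univ_two, add_comm]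

lemma E12_mul {R : Type*} [CommRing R] (a b : R) : E12 a * E12 b = E12 (a + b) := by
  ext i j
  rw [Matrix.SpecialLinearGroup.coe_mul]
  fin_cases i <;> fin_cases j <;>
    simp [E12, Matrix.mul_apply, Fin.sum_univ_two, add_comm]

lemma E21_inv {R : Type*} [CommRing R] (a : R) : (E21 a)⁻¹ = E21 (-a) := by
  rw [inv_eq_iff_mul_eq_one, E21_mul]
  ext i j
  fin_cases i <;> fin_cases j <;> simp [E21]

lemma conjSet_conj {G : Type*} [Group G] (T : Set G) (g a : G) (ha : a ∈ conjSet T) :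
    g⁻¹ * a * g ∈ conjSet T := by
  obtain ⟨A, hA, x, hx | hx⟩ := ha
  · exact ⟨A, hA, x * g, by left; rw [hx]; group⟩
  · exact ⟨A, hA, x * g, by right; rw [hx]; group⟩

lemma conj_prod {G : Type*} [Group G] (g : G) (l : List G) :
    (l.map (fun a => g⁻¹ * a * g)).prod = g⁻¹ * l.prod * g := by
  induction l with
  | nil => simp
  | cons b t ih => simp [ih]; group

theorem self_reproducing_additivity (R : Type*) [CommRing R] (T : Set (SL2 R))
    (x₁ x₂ : R) (k₁ k₂ : ℕ) (h₁ : Csr x₁ ∈ BT T k₁) (h₂ : Csr x₂ ∈ BT T k₂) :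
    Csr (x₁ + x₂) ∈ BT T (k₁ + k₂) := by
  obtain ⟨l₁, hl₁, hc₁, hp₁⟩ := h₁
  obtain ⟨l₂, hl₂, hc₂, hp₂⟩ := h₂
  set g : SL2 R := (E21 x₂)⁻¹
  refine ⟨(l₁.map (fun a => g⁻¹ * a * g)) ++ l₂, ?_, ?_, ?_⟩
  · simpa using Nat.add_le_add hl₁ hl₂
  · intro a ha
    rcases List.mem_append.1 ha with ha | ha
    · obtain ⟨b, hb, rfl⟩ := List.mem_map.1 ha
      exact conjSet_conj T g b (hc₁ b hb)
    · exact hc₂ a ha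
  · rw [List.prod_append, conj_prod, hp₁, hp₂]
    have hg : g = E21 (-x₂) := E21_inv x₂
    rw [inv_inv, hg]
    show E21 x₂ * Csr x₁ * E21 (-x₂) * Csr x₂ = Csr (x₁ + x₂)
    simp only [Csr]
    calc E21 x₂ * (E21 x₁ * E12 x₁) * E21 (-x₂) * (E21 x₂ * E12 x₂)
        = E21 x₂ * E21 x₁ * E12 x₁ * (E21 (-x₂) * E21 x₂) * E12 x₂ := by group
      _ = E21 (x₁ + x₂) * E12 (x₁ + x₂) := by
          rw [E21_mul, E21_mul, neg_add_cancel, add_comm x₂ x₁]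
          have h0 : E21 (0 : R) = 1 := by ext i j; fin_cases i <;> fin_cases j <;> simp [E21]
          rw [h0, mul_one, mul_assoc, E12_mul]
end

section
/- Let R be a commutative ring with 1 and let T ⊆ SL₂(R) be a subset whose normal closure equals SL₂(R). Then l(T) = Σ_{A∈T} l(A) = R. -/
open Matrix

/-- The level ideal `l(A) = (a - d, b, c)` of `A = (a b; c d) ∈ SL₂(R)`. -/
def levelIdeal {R : Type*} [CommRing R] (A : SL2 R) : Ideal R :=
  Ideal.span {A.1 0 0 - A.1 1 1, A.1 0 1, A.1 1 0}

theorem level_ideal_of_normally_generating_set (R : Type*) [CommRing R]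
    (T : Set (SL2 R)) (hT : Subgroup.normalClosure T = ⊤) :
    (⨆ A ∈ T, levelIdeal A) = (⊤ : Ideal R) := by
  set I : Ideal R := ⨆ A ∈ T, levelIdeal A with hI
  let f := Ideal.Quotient.mk I
  let φ : SL2 R →* SL2 (R ⧸ I) := Matrix.SpecialLinearGroup.map f
  have hmem : ∀ A ∈ T, ∀ x ∈ levelIdeal A, x ∈ I := by
    intro A hA x hx
    exact (le_iSup₂ (f := fun (A : SL2 R) (_ : A ∈ T) => levelIdeal A) A hA) hx
  have hcent : ∀ A ∈ T, φ A ∈ Subgroup.center (SL2 (R ⧸ I)) := by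
    intro A hA
    have h1 : f (A.1 0 0 - A.1 1 1) = 0 := by
      rw [Ideal.Quotient.eq_zero_iff_mem]
      exact hmem A hA _ (Ideal.subset_span (by simp))
    have h2 : f (A.1 0 1) = 0 := by
      rw [Ideal.Quotient.eq_zero_iff_mem]
      exact hmem A hA _ (Ideal.subset_span (by simp))
    have h3 : f (A.1 1 0) = 0 := by
      rw [Ideal.Quotient.eq_zero_iff_mem]
      exact hmem A hA _ (Ideal.subset_span (by simp))
    have h1' : f (A.1 0 0) = f (A.1 1 1) := by
      rw [← sub_eq_zero, ← map_sub]; exact h1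
    rw [Subgroup.mem_center_iff]
    intro g
    apply Subtype.ext
    show (g.1 * (φ A).1) = ((φ A).1 * g.1)
    have hφ : (φ A).1 = Matrix.of fun i j => f (A.1 i j) := rfl
    ext i j
    fin_cases i <;> fin_cases j <;>
      simp [Matrix.mul_apply, Fin.sum_univ_two, hφ, h2, h3, h1', mul_comm]
  have hnormal : (Subgroup.center (SL2 (R ⧸ I))).comap φ |>.Normal :=
    Subgroup.Normal.comap inferInstance φ
  have hle : Subgroup.normalClosure T ≤ (Subgroup.center (SL2 (R ⧸ I))).comap φ :=
    Subgroup.normalClosure_le_normal (fun A hA => hcent A hA)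
  have hall : ∀ g : SL2 R, φ g ∈ Subgroup.center (SL2 (R ⧸ I)) := by
    intro g
    exact hle (hT ▸ Subgroup.mem_top g)
  -- elementary matrices
  have hdetE : Matrix.det !![(1:R), 1; 0, 1] = 1 := by
    simp [Matrix.det_fin_two_of]
  let E : SL2 R := ⟨!![(1:R), 1; 0, 1], hdetE⟩
  have hdetB : Matrix.det !![(1:R ⧸ I), 0; 1, 1] = 1 := by
    simp [Matrix.det_fin_two_of]
  let B : SL2 (R ⧸ I) := ⟨!![(1:R ⧸ I), 0; 1, 1], hdetB⟩
  have hc := Subgroup.mem_center_iff.mp (hall E) B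
  have hc' : (B.1 * (φ E).1) 0 0 = ((φ E).1 * B.1) 0 0 := by
    have := congrArg (fun M : SL2 (R ⧸ I) => M.1 0 0) hc
    simpa using this
  have hφE : (φ E).1 = Matrix.of fun i j => f (E.1 i j) := rfl
  simp only [Matrix.mul_apply, Fin.sum_univ_two, hφE] at hc'
  simp [B, E] at hc'
  have hone : (1 : R ⧸ I) = 0 := by linear_combination hc'
  rw [Ideal.eq_top_iff_one, ← Ideal.Quotient.eq_zero_iff_mem]
  simpa using hone
end

section
/- There is a natural number L₂ such that for every commutative ring R with 1 and every unit u ∈ R^*, one has {E12(x·(u⁴ − 1)) : x ∈ R} ⊆ B_{C(1)}(L₂). -/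
open Matrix

namespace Tech2

variable {R : Type} [CommRing R]

/-- conjugating matrix -/
def GM (u v : R) (h : u * v = 1) : SL2 R :=
  ⟨!![3*u-2*v, 5*u-4*v; v, 2*v], by
    rw [Matrix.det_fin_two_of]; linear_combination h⟩

/-- `A = g C g⁻¹` -/
def AM (u v : R) (h : u * v = 1) : SL2 R :=
  ⟨!![3-2*v^2, 6-u^2-4*v^2; v^2, 2*v^2], by
    rw [Matrix.det_fin_two_of]; linear_combination (1+u*v)*h⟩

/-- `Y = A C⁻¹`, upper triangular with diagonal `(u², u⁻²)` -/
def YM (u v : R) (h : u * v = 1) : SL2 R :=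
  ⟨!![u^2, 3-u^2-2*v^2; 0, v^2], by
    rw [Matrix.det_fin_two_of]; linear_combination (1+u*v)*h⟩

/-- `C(1)` as an explicit matrix -/
def CM : SL2 R := ⟨!![1,1;1,2], by rw [Matrix.det_fin_two_of]; norm_num⟩

lemma csr_eq : Csr (1:R) = CM := by
  ext i j
  simp only [Csr, Matrix.SpecialLinearGroup.coe_mul]
  fin_cases i <;> fin_cases j <;>
    simp [Csr, CM, E12, E21, Matrix.mul_apply, Fin.sum_univ_two] <;> try norm_num

lemma e12_mul (a b : R) : E12 a * E12 b = E12 (a+b) := by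
  ext i j
  simp only [Matrix.SpecialLinearGroup.coe_mul]
  fin_cases i <;> fin_cases j <;>
    simp [E12, Matrix.mul_apply, Fin.sum_univ_two] <;> try ring

lemma h1 (u v : R) (h : u * v = 1) :
    GM u v h * CM = AM u v h * GM u v h := by
  ext i j
  simp only [Matrix.SpecialLinearGroup.coe_mul]
  fin_cases i <;> fin_cases j <;>
    simp [GM, AM, CM, Matrix.mul_apply, Fin.sum_univ_two]
  · linear_combination (6*v+u)*h
  · linear_combination (10*v+2*u)*h
  · linear_combination (-3*v)*h
  · linear_combination (-5*v)*h

lemma h2 (u v : R) (h : u * v = 1) :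
    YM u v h * CM = AM u v h := by
  ext i j
  simp only [Matrix.SpecialLinearGroup.coe_mul]
  fin_cases i <;> fin_cases j <;>
    simp [YM, AM, CM, Matrix.mul_apply, Fin.sum_univ_two] <;>
    ring

lemma h3 (u v x : R) (h : u * v = 1) :
    YM u v h * E12 x = E12 (x*u^4) * YM u v h := by
  ext i j
  simp only [Matrix.SpecialLinearGroup.coe_mul]
  fin_cases i <;> fin_cases j <;>
    simp [YM, E12, Matrix.mul_apply, Fin.sum_univ_two]
  · linear_combination (-(u^2*x) - u^3*v*x)*h

end Tech2

theorem technical_thm2 :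
    ∃ L₂ : ℕ, ∀ (R : Type) [CommRing R], ∀ u : Rˣ, ∀ x : R,
      E12 (x * ((u : R) ^ 4 - 1)) ∈ BT {Csr (1 : R)} L₂ := by
  refine ⟨4, fun R _ u x => ?_⟩
  have hu : (u : R) * ((u⁻¹ : Rˣ) : R) = 1 := u.mul_inv
  set v : R := ((u⁻¹ : Rˣ) : R) with hv
  set G : SL2 R := Tech2.GM (u : R) v hu with hG
  set A : SL2 R := Tech2.AM (u : R) v hu with hA
  set Y : SL2 R := Tech2.YM (u : R) v hu with hY
  set Cm : SL2 R := Tech2.CM with hCm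
  have hGA : G * Cm * G⁻¹ = A := by
    rw [hG, hA, hCm]
    rw [Tech2.h1 (u : R) v hu]
    group
  have hACY : A * Cm⁻¹ = Y := by
    rw [hA, hCm, hY, ← Tech2.h2 (u : R) v hu]
    group
  have hGCY : G * Cm * G⁻¹ * Cm⁻¹ = Y := by rw [hGA, hACY]
  have hYi : Cm * G * Cm⁻¹ * G⁻¹ = Y⁻¹ := by
    rw [← hGCY]; group
  have h5 : E12 (x*((u:R)^4-1)) * E12 x = E12 (x*(u:R)^4) := by
    rw [Tech2.e12_mul]; congr 1; ring
  have key : Y * E12 x * Y⁻¹ * (E12 x)⁻¹ = E12 (x*((u:R)^4 - 1)) := by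
    rw [hY, Tech2.h3 (u : R) v x hu, ← h5, ← hY]
    group
  refine ⟨[G * Cm * G⁻¹, Cm⁻¹, E12 x * Cm * (E12 x)⁻¹,
            (E12 x * G) * Cm⁻¹ * (E12 x * G)⁻¹], by simp, ?_, ?_⟩
  · intro a ha
    simp only [List.mem_cons, List.not_mem_nil, or_false] at ha
    have hmem : Csr (1:R) ∈ ({Csr (1:R)} : Set (SL2 R)) := rfl
    rcases ha with h | h | h | h
    · exact ⟨Csr 1, hmem, G⁻¹, Or.inl (by rw [h, Tech2.csr_eq, ← hCm]; group)⟩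
    · exact ⟨Csr 1, hmem, 1, Or.inr (by rw [h, Tech2.csr_eq, ← hCm]; group)⟩
    · exact ⟨Csr 1, hmem, (E12 x)⁻¹, Or.inl (by rw [h, Tech2.csr_eq, ← hCm]; group)⟩
    · exact ⟨Csr 1, hmem, (E12 x * G)⁻¹, Or.inr (by rw [h, Tech2.csr_eq, ← hCm]; group)⟩
  · simp only [List.prod_cons, List.prod_nil, mul_one]
    calc G * Cm * G⁻¹ * (Cm⁻¹ * ((E12 x * Cm * (E12 x)⁻¹) *
            ((E12 x * G) * Cm⁻¹ * (E12 x * G)⁻¹)))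
        = (G * Cm * G⁻¹ * Cm⁻¹) * (E12 x * (Cm * G * Cm⁻¹ * G⁻¹) * (E12 x)⁻¹) := by
          group
      _ = Y * (E12 x * Y⁻¹ * (E12 x)⁻¹) := by rw [hGCY, hYi]
      _ = Y * E12 x * Y⁻¹ * (E12 x)⁻¹ := by group
      _ = E12 (x * ((u:R)^4 - 1)) := key
end

section
/- Let R = O_S be the ring of S-algebraic integers in a number field K such that R has infinitely many units. Then R is a ring with many units; that is, (i) for every c ∈ R − ({0} ∪ R^*) the quotient R/cR has stable range 1, and (ii) for every x ∈ R − {0} there is a unit u ∈ R with u⁴ ≠ 1 and u² ≡ 1 mod xR. -/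
open Matrix

/-- `R` is the ring of S-algebraic integers of the number field `K` with respect to the
finite set `S` of nonzero prime ideals of the ring of integers of `K`. -/
def IsSIntegers (K : Type*) [Field K] [NumberField K]
    (S : Finset (Ideal (NumberField.RingOfIntegers K))) (R : Subring K) : Prop :=
  (∀ P ∈ S, P ≠ ⊥ ∧ P.IsPrime) ∧
  (R : Set K) = {x | ∃ a b : NumberField.RingOfIntegers K, b ≠ 0 ∧
      (∀ P : Ideal (NumberField.RingOfIntegers K), P.IsPrime → P ∣ Ideal.span {b} → P ∈ S) ∧
      x = (a : K) / (b : K)}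

/-- A ring with many units: (i) `R/cR` has (Bass) stable range 1 for every
`c ∈ R - ({0} ∪ Rˣ)`; (ii) for every `x ≠ 0` there is a unit `u` with `u⁴ ≠ 1` and
`u² ≡ 1 mod xR`. -/
def ManyUnits (R : Type*) [CommRing R] : Prop :=
  (∀ c : R, c ≠ 0 → ¬ IsUnit c →
    ∀ a b : R ⧸ Ideal.span {c}, Ideal.span {a, b} = ⊤ → ∃ x, IsUnit (a + b * x)) ∧
  (∀ x : R, x ≠ 0 → ∃ u : Rˣ, (u : R) ^ 4 ≠ 1 ∧ (u : R) ^ 2 - 1 ∈ Ideal.span {x})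


set_option maxHeartbeats 1000000
set_option synthInstance.maxHeartbeats 400000
set_option linter.unusedSectionVars false

lemma stable_range_one_of_finite (Q : Type*) [CommRing Q] [Finite Q]
    (a b : Q) (h : Ideal.span {a, b} = ⊤) : ∃ x, IsUnit (a + b * x) := by
  cases subsingleton_or_nontrivial Q with
  | inl hs => exact ⟨0, isUnit_of_subsingleton _⟩
  | inr hnt =>
    have hfin : Finite (Ideal Q) := Finite.of_injective (fun I => (I : Set Q)) SetLike.coe_injective
    let ι := {I : Ideal Q // I.IsMaximal}
    have : Finite ι := Subtype.finite
    let f : ι → Ideal Q := Subtype.val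
    have hco : Pairwise (Function.onFun IsCoprime f) := by
      intro I J hIJ
      show IsCoprime (f I) (f J)
      rw [Ideal.isCoprime_iff_sup_eq]
      exact Ideal.IsMaximal.coprime_of_ne I.2 J.2 (by simpa [f, Subtype.coe_inj] using hIJ)
    classical
    let v : ι → Q := fun m => if a ∈ m.1 then 1 else 0
    obtain ⟨x, hx⟩ := Ideal.pi_quotient_surjective hco (fun m => Ideal.Quotient.mk (f m) (v m))
    refine ⟨x, ?_⟩
    by_contra hu
    obtain ⟨m, hm, hmem⟩ := exists_max_ideal_of_mem_nonunits hu
    have hxv : x - v ⟨m, hm⟩ ∈ m := by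
      exact (Ideal.Quotient.eq (I := m)).mp (hx ⟨m, hm⟩)
    have hbxv : b * (x - v ⟨m, hm⟩) ∈ m := Ideal.mul_mem_left _ _ hxv
    by_cases ham : a ∈ m
    · have hb : b ∉ m := by
        intro hb
        have : Ideal.span {a, b} ≤ m := by
          rw [Ideal.span_le]
          rintro y (rfl | rfl) <;> simpa
        rw [h] at this
        have : m = ⊤ := top_le_iff.mp this
        exact hm.ne_top this
      apply hb
      have hv : v ⟨m, hm⟩ = 1 := by simp [v, ham]
      have : a + b * x - (a + b * (x - 1)) ∈ m := by
        have h1 : a + b * (x - 1) ∈ m := by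
          have : a + b * (x - v ⟨m, hm⟩) ∈ m := Ideal.add_mem _ ham hbxv
          rwa [hv] at this
        exact Ideal.sub_mem _ hmem h1
      have hbeq : a + b * x - (a + b * (x - 1)) = b := by ring
      rwa [hbeq] at this
    · have hv : v ⟨m, hm⟩ = 0 := by simp [v, ham]
      apply ham
      have hxm : x ∈ m := by rwa [hv, sub_zero] at hxv
      have : a + b * x - b * x ∈ m := Ideal.sub_mem _ hmem (Ideal.mul_mem_left _ _ hxm)
      simpa using this


lemma many_units_part2 (R : Type*) [CommRing R] [IsDomain R] [Infinite Rˣ] (x : R)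
    (hfin : Finite (R ⧸ Ideal.span {x})) :
    ∃ u : Rˣ, (u : R) ^ 4 ≠ 1 ∧ (u : R) ^ 2 - 1 ∈ Ideal.span {x} := by
  set Q := R ⧸ Ideal.span {x}
  let f : Rˣ →* Qˣ := Units.map (Ideal.Quotient.mk (Ideal.span {x})).toMonoidHom
  have key : ∃ u : Rˣ, (u : R) ^ 4 ≠ 1 ∧ f u = 1 := by
    by_contra hc
    push_neg at hc
    have hker : ∀ u : Rˣ, f u = 1 → (u : R) ^ 4 = 1 := by
      intro u hu
      by_contra h4
      exact hc u h4 hu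
    -- the set of 4th roots of unity in R is finite
    have hroots : Set.Finite {y : R | y ^ 4 = 1} := by
      have hp : (Polynomial.X ^ 4 - 1 : Polynomial R) ≠ 0 := by
        intro hp0
        have := congrArg (Polynomial.coeff · 0) hp0
        simp at this
      refine Set.Finite.subset (Polynomial.finite_setOf_isRoot hp) ?_
      intro y hy
      simp [Polynomial.IsRoot, sub_eq_zero, hy]
    have hsub : Finite {y : R // y ^ 4 = 1} := hroots.to_subtype
    have hkfin : Finite f.ker := by
      refine Finite.of_injective
        (fun u : f.ker => (⟨((u : Rˣ) : R), hker u (MonoidHom.mem_ker.mp u.2)⟩ :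
          {y : R // y ^ 4 = 1})) ?_
      intro u v huv
      have : ((u : Rˣ) : R) = ((v : Rˣ) : R) := congrArg Subtype.val huv
      exact Subtype.ext (Units.ext this)
    have hqfin : Finite (Rˣ ⧸ f.ker) :=
      Finite.of_injective (QuotientGroup.kerLift f) (QuotientGroup.kerLift_injective f)
    have : Finite Rˣ := Finite.of_equiv ((Rˣ ⧸ f.ker) × f.ker) (Subgroup.groupEquivQuotientProdSubgroup (s := f.ker)).symm
    exact not_finite Rˣ
  obtain ⟨u, hu4, hu1⟩ := key
  refine ⟨u, hu4, ?_⟩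
  have h1 : Ideal.Quotient.mk (Ideal.span {x}) (u : R) = 1 := by
    have := congrArg (Units.val) hu1
    simpa [f] using this
  have h2 : (u : R) - 1 ∈ Ideal.span {x} :=
    Ideal.Quotient.eq.mp (by simpa using h1)
  have : (u : R) ^ 2 - 1 = ((u : R) - 1) * ((u : R) + 1) := by ring
  rw [this]
  exact Ideal.mul_mem_right _ _ h2


open NumberField

section
variable {K : Type*} [Field K] [NumberField K]
  {S : Finset (Ideal (RingOfIntegers K))} {R : Subring K}

lemma int_mem (hR : (R : Set K) = {x | ∃ a b : RingOfIntegers K, b ≠ 0 ∧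
      (∀ P : Ideal (RingOfIntegers K), P.IsPrime → P ∣ Ideal.span {b} → P ∈ S) ∧
      x = (a : K) / (b : K)}) (a : RingOfIntegers K) : (a : K) ∈ R := by
  have : (a : K) ∈ (R : Set K) := by
    rw [hR]
    refine ⟨a, 1, one_ne_zero, ?_, by simp⟩
    intro P hP hPd
    exfalso
    have : Ideal.span {(1 : RingOfIntegers K)} = ⊤ := by simp
    rw [this] at hPd
    exact hP.ne_top (top_le_iff.mp (Ideal.le_of_dvd hPd))
  exact this

lemma inv_mem (hR : (R : Set K) = {x | ∃ a b : RingOfIntegers K, b ≠ 0 ∧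
      (∀ P : Ideal (RingOfIntegers K), P.IsPrime → P ∣ Ideal.span {b} → P ∈ S) ∧
      x = (a : K) / (b : K)}) (b : RingOfIntegers K) (hb : b ≠ 0)
    (hbS : ∀ P : Ideal (RingOfIntegers K), P.IsPrime → P ∣ Ideal.span {b} → P ∈ S) :
    (1 : K) / (b : K) ∈ R := by
  have : (1 : K) / (b : K) ∈ (R : Set K) := by
    rw [hR]
    exact ⟨1, b, hb, hbS, by simp⟩
  exact this

noncomputable def psi (hR : (R : Set K) = {x | ∃ a b : RingOfIntegers K, b ≠ 0 ∧
      (∀ P : Ideal (RingOfIntegers K), P.IsPrime → P ∣ Ideal.span {b} → P ∈ S) ∧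
      x = (a : K) / (b : K)}) : RingOfIntegers K →+* R :=
  (algebraMap (RingOfIntegers K) K).codRestrict R.toSubsemiring (fun a => int_mem hR a)

lemma quotient_finite (hR : (R : Set K) = {x | ∃ a b : RingOfIntegers K, b ≠ 0 ∧
      (∀ P : Ideal (RingOfIntegers K), P.IsPrime → P ∣ Ideal.span {b} → P ∈ S) ∧
      x = (a : K) / (b : K)}) (x : R) (hx : x ≠ 0) :
    Finite (R ⧸ Ideal.span {x}) := by
  classical
  set O := RingOfIntegers K
  set ψ := psi hR with hψ
  have hψval : ∀ o : O, ((ψ o : R) : K) = (o : K) := fun o => rfl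
  -- unit lemma: any admissible denominator is invertible in R
  have hunit : ∀ d : O, d ≠ 0 →
      (∀ P : Ideal O, P.IsPrime → P ∣ Ideal.span {d} → P ∈ S) → IsUnit (ψ d) := by
    intro d hd0 hdS
    have hdK : (d : K) ≠ 0 := RingOfIntegers.coe_ne_zero_iff.mpr hd0
    refine IsUnit.of_mul_eq_one ⟨(1 : K) / (d : K), inv_mem hR d hd0 hdS⟩ ?_
    ext
    push_cast
    exact mul_one_div_cancel hdK
  -- write x = a / b
  obtain ⟨a, b, hb0, hbS, hxab⟩ : ∃ a b : O, b ≠ 0 ∧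
      (∀ P : Ideal O, P.IsPrime → P ∣ Ideal.span {b} → P ∈ S) ∧
      (x : K) = (a : K) / (b : K) := by
    have : (x : K) ∈ (R : Set K) := x.2
    rwa [hR] at this
  have hbK : (b : K) ≠ 0 := RingOfIntegers.coe_ne_zero_iff.mpr hb0
  have hxB : x * ψ b = ψ a := by
    ext
    push_cast [hψval]
    rw [hxab, div_mul_cancel₀ _ hbK]
  have ha0 : a ≠ 0 := by
    intro h
    apply hx
    ext
    rw [show ((x : R) : K) = (a : K) / (b : K) from hxab, h]
    simp
  have hspan : Ideal.span {ψ a} = Ideal.span {x} := by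
    rw [← hxB]
    exact Ideal.span_singleton_mul_right_unit (hunit b hb0 hbS) x
  set Q := R ⧸ Ideal.span {(x : R)}
  set φ : O →+* Q := (Ideal.Quotient.mk (Ideal.span {(x : R)})).comp ψ with hφ
  have hφa : ∀ e : O, φ (a * e) = 0 := by
    intro e
    have h1 : ψ (a * e) ∈ Ideal.span {(x : R)} := by
      rw [← hspan, map_mul]
      exact Ideal.mul_mem_right _ _ (Ideal.mem_span_singleton_self _)
    exact Ideal.Quotient.eq_zero_iff_mem.mpr h1
  -- finiteness of O ⧸ (a)
  have hOfin : Finite (O ⧸ Ideal.span {a}) := by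
    have := Ideal.finiteQuotientOfFreeOfNeBot (S := O) (Ideal.span {a})
      (by simpa [Ideal.span_singleton_eq_bot] using ha0)
    exact this
  -- surjectivity of φ
  have hsurj : Function.Surjective φ := by
    intro q
    obtain ⟨r, rfl⟩ := Ideal.Quotient.mk_surjective q
    obtain ⟨c, d, hd0, hdS, hrcd⟩ : ∃ c d : O, d ≠ 0 ∧
        (∀ P : Ideal O, P.IsPrime → P ∣ Ideal.span {d} → P ∈ S) ∧
        (r : K) = (c : K) / (d : K) := by
      have : (r : K) ∈ (R : Set K) := r.2
      rwa [hR] at this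
    have hdK : (d : K) ≠ 0 := RingOfIntegers.coe_ne_zero_iff.mpr hd0
    have hrD : r * ψ d = ψ c := by
      ext
      push_cast [hψval]
      rw [hrcd, div_mul_cancel₀ _ hdK]
    -- powers of d repeat mod (a)
    obtain ⟨m, n, hmn, hg⟩ := Finite.exists_ne_map_eq_of_infinite
      (fun k : ℕ => Ideal.Quotient.mk (Ideal.span {a}) (d ^ k))
    wlog hlt : m < n generalizing m n
    · exact this n m hmn.symm hg.symm (by omega)
    have hdvd : a ∣ d ^ m - d ^ n := by
      rw [← Ideal.mem_span_singleton]
      exact Ideal.Quotient.eq.mp hg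
    obtain ⟨e, he⟩ := hdvd
    -- in Q : φ d ^ m = φ d ^ n
    have hQpow : φ d ^ m = φ d ^ n := by
      have : φ (d ^ m) - φ (d ^ n) = φ (a * e) := by
        rw [← map_sub, he]
      rw [hφa] at this
      have := sub_eq_zero.mp this
      simpa [map_pow] using this
    have hDu : IsUnit (φ d) := (hunit d hd0 hdS).map (Ideal.Quotient.mk _)
    have hDpow1 : φ d ^ (n - m) = 1 := by
      have hmu : IsUnit (φ d ^ m) := IsUnit.pow m hDu
      have : φ d ^ m * φ d ^ (n - m) = φ d ^ m * 1 := by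
        rw [mul_one, ← pow_add]
        rw [hQpow]
        congr 1
        omega
      exact hmu.mul_left_cancel this
    refine ⟨c * d ^ (n - m - 1), ?_⟩
    have hkey : Ideal.Quotient.mk (Ideal.span {(x : R)}) r * (φ d * φ d ^ (n - m - 1)) =
        Ideal.Quotient.mk (Ideal.span {(x : R)}) r := by
      rw [← pow_succ']
      have : n - m - 1 + 1 = n - m := by omega
      rw [this, hDpow1, mul_one]
    calc φ (c * d ^ (n - m - 1))
        = Ideal.Quotient.mk _ (r * ψ d) * φ d ^ (n - m - 1) := by
          rw [hrD]; simp [φ, map_mul, map_pow]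
      _ = Ideal.Quotient.mk _ r * (φ d * φ d ^ (n - m - 1)) := by
          simp [φ, map_mul]; ring
      _ = _ := hkey
  have hker : ∀ y ∈ Ideal.span {a}, φ y = 0 := by
    intro y hy
    obtain ⟨e, rfl⟩ := Ideal.mem_span_singleton.mp hy
    exact hφa e
  have : Function.Surjective (Ideal.Quotient.lift (Ideal.span {a}) φ hker) := by
    intro q
    obtain ⟨o, ho⟩ := hsurj q
    exact ⟨Ideal.Quotient.mk _ o, by rwa [Ideal.Quotient.lift_mk]⟩
  exact Finite.of_surjective _ this
end



theorem S_integers_have_many_units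
    (K : Type*) [Field K] [NumberField K]
    (S : Finset (Ideal (NumberField.RingOfIntegers K)))
    (R : Subring K) (hR : IsSIntegers K S R) (hU : Infinite (↥R)ˣ) :
    ManyUnits ↥R := by
  obtain ⟨hS, hmem⟩ := hR
  constructor
  · intro c hc _ a b hab
    have := quotient_finite hmem c hc
    exact stable_range_one_of_finite _ a b hab
  · intro x hx
    haveI := hU
    exact many_units_part2 _ x (quotient_finite hmem x hx)
end

section
/- Let R = O_S be the ring of S-algebraic integers in a number field K and let P be a ramified prime divisor of 2R with R/P ≅ F₂. Set R̄ := R/P² and let P̄ denote the image of P in R̄ (so 2 = 0 in R̄, F₂ is a subring of R̄, and SL₂(F₂) is a subgroup of SL₂(R̄)). Let K denote the kernel of the reduction homomorphism SL₂(R̄) → SL₂(R̄/P̄) = SL₂(F₂). Then there is a group homomorphism q: SL₂(R̄) → (P̄, +) such that q((a b; c d)) = a − 1 + b + c for every (a b; c d) ∈ K, and q vanishes on the subgroup SL₂(F₂) ⊆ SL₂(R̄). -/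
open Matrix

section Aux

variable {A : Type*} [CommRing A] {J : Ideal A}

/-- The retraction of `A` onto `{0, 1}` determined by the ideal `J`. -/
noncomputable def theta (J : Ideal A) (x : A) : A :=
  letI := Classical.dec (x ∈ J)
  if x ∈ J then 0 else 1

lemma theta_of_mem {x : A} (hx : x ∈ J) : theta J x = 0 := by
  unfold theta; exact if_pos hx

lemma theta_of_not_mem {x : A} (hx : x ∉ J) : theta J x = 1 := by
  unfold theta; exact if_neg hx

lemma theta01 (J : Ideal A) (x : A) : theta J x = 0 ∨ theta J x = 1 := by
  by_cases hx : x ∈ J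
  · exact Or.inl (theta_of_mem hx)
  · exact Or.inr (theta_of_not_mem hx)

lemma theta_sub_mem (hJ01 : ∀ x : A, x ∈ J ∨ x - 1 ∈ J) (x : A) :
    x - theta J x ∈ J := by
  by_cases hx : x ∈ J
  · rw [theta_of_mem hx]; simpa using hx
  · rw [theta_of_not_mem hx]; exact (hJ01 x).resolve_left hx

lemma not_mem_of_sub_one_mem (h1 : (1:A) ∉ J) {x : A} (hx : x - 1 ∈ J) : x ∉ J := by
  intro h
  exact h1 (by simpa using J.sub_mem h hx)

lemma theta_one (h1 : (1:A) ∉ J) : theta J (1:A) = 1 := theta_of_not_mem h1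

lemma theta_zero : theta J (0:A) = 0 := theta_of_mem J.zero_mem

lemma theta_mul (h1 : (1:A) ∉ J) (hJ01 : ∀ x : A, x ∈ J ∨ x - 1 ∈ J) (x y : A) :
    theta J (x*y) = theta J x * theta J y := by
  by_cases hx : x ∈ J
  · rw [theta_of_mem hx, theta_of_mem (J.mul_mem_right y hx), zero_mul]
  · by_cases hy : y ∈ J
    · rw [theta_of_mem hy, theta_of_mem (J.mul_mem_left x hy), mul_zero]
    · have hx1 := (hJ01 x).resolve_left hx
      have hy1 := (hJ01 y).resolve_left hy
      have hxy : x*y - 1 ∈ J := by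
        have h := J.add_mem (J.mul_mem_left x hy1) hx1
        have : x * (y - 1) + (x - 1) = x*y - 1 := by ring
        rwa [this] at h
      rw [theta_of_not_mem hx, theta_of_not_mem hy,
        theta_of_not_mem (not_mem_of_sub_one_mem h1 hxy), one_mul]

lemma theta_add (h1 : (1:A) ∉ J) (h2 : (2:A) = 0)
    (hJ01 : ∀ x : A, x ∈ J ∨ x - 1 ∈ J) (x y : A) :
    theta J (x+y) = theta J x + theta J y := by
  by_cases hx : x ∈ J
  · by_cases hy : y ∈ J
    · rw [theta_of_mem hx, theta_of_mem hy, theta_of_mem (J.add_mem hx hy), add_zero]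
    · have hy1 := (hJ01 y).resolve_left hy
      have hxy : (x + y) - 1 ∈ J := by
        have h := J.add_mem hx hy1
        have : x + (y - 1) = (x + y) - 1 := by ring
        rwa [this] at h
      rw [theta_of_mem hx, theta_of_not_mem hy,
        theta_of_not_mem (not_mem_of_sub_one_mem h1 hxy), zero_add]
  · by_cases hy : y ∈ J
    · have hx1 := (hJ01 x).resolve_left hx
      have hxy : (x + y) - 1 ∈ J := by
        have h := J.add_mem hx1 hy
        have : (x - 1) + y = (x + y) - 1 := by ring
        rwa [this] at h
      rw [theta_of_not_mem hx, theta_of_mem hy,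
        theta_of_not_mem (not_mem_of_sub_one_mem h1 hxy), add_zero]
    · have hx1 := (hJ01 x).resolve_left hx
      have hy1 := (hJ01 y).resolve_left hy
      have hxy : x + y ∈ J := by
        have h := J.add_mem hx1 hy1
        have : (x - 1) + (y - 1) = (x + y) - 2 := by ring
        rw [this, h2, sub_zero] at h
        exact h
      rw [theta_of_mem hxy, theta_of_not_mem hx, theta_of_not_mem hy]
      linear_combination -h2

lemma theta_sub (h1 : (1:A) ∉ J) (h2 : (2:A) = 0)
    (hJ01 : ∀ x : A, x ∈ J ∨ x - 1 ∈ J) (x y : A) :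
    theta J (x-y) = theta J x - theta J y := by
  by_cases hx : x ∈ J
  · by_cases hy : y ∈ J
    · rw [theta_of_mem hx, theta_of_mem hy, theta_of_mem (J.sub_mem hx hy), sub_zero]
    · have hy1 := (hJ01 y).resolve_left hy
      have h2J : (2:A) ∈ J := h2 ▸ J.zero_mem
      have hxy : (x - y) - 1 ∈ J := by
        have h := J.sub_mem (J.sub_mem hx hy1) h2J
        have : (x - (y-1)) - 2 = (x - y) - 1 := by ring
        rwa [this] at h
      rw [theta_of_mem hx, theta_of_not_mem hy,
        theta_of_not_mem (not_mem_of_sub_one_mem h1 hxy)]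
      linear_combination h2
  · by_cases hy : y ∈ J
    · have hx1 := (hJ01 x).resolve_left hx
      have hxy : (x - y) - 1 ∈ J := by
        have h := J.sub_mem hx1 hy
        have : (x - 1) - y = (x - y) - 1 := by ring
        rwa [this] at h
      rw [theta_of_not_mem hx, theta_of_mem hy,
        theta_of_not_mem (not_mem_of_sub_one_mem h1 hxy), sub_zero]
    · have hx1 := (hJ01 x).resolve_left hx
      have hy1 := (hJ01 y).resolve_left hy
      have hxy : x - y ∈ J := by
        have h := J.sub_mem hx1 hy1
        have : (x - 1) - (y - 1) = x - y := by ring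
        rwa [this] at h
      rw [theta_of_mem hxy, theta_of_not_mem hx, theta_of_not_mem hy, sub_self]

lemma inv_sum (h01 : (0:A) ≠ 1) (h2 : (2:A) = 0)
    {p q r t : A} (hp : p = 0 ∨ p = 1) (hq : q = 0 ∨ q = 1)
    (hr : r = 0 ∨ r = 1) (ht : t = 0 ∨ t = 1)
    (hsdet : p*t - q*r = 1) {m n u w : A} (htr : m + w = 0) :
    (p*t*m + q*t*u - p*r*n - q*r*w) + (p*p*n + p*q*w - p*q*m - q*q*u)
      + (r*t*m + t*t*u - r*r*n - r*t*w) = m + n + u := by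
  rcases hp with rfl|rfl <;> rcases hq with rfl|rfl <;>
    rcases hr with rfl|rfl <;> rcases ht with rfl|rfl <;>
    first
      | (exact absurd (by linear_combination hsdet) h01)
      | ring1
      | linear_combination htr - m*h2
      | linear_combination -htr + (m-n)*h2
      | linear_combination -htr + (-u-n)*h2
      | linear_combination -htr - htr + (m-n)*h2
      | linear_combination (-u-n-m)*h2

lemma trace_zero (hJJ : ∀ x ∈ J, ∀ y ∈ J, x*y = (0:A))
    {e f k l p2 q2 r2 t2 : A} (hdeth : e*l - f*k = 1) (hsdeth : p2*t2 - q2*r2 = 1)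
    (hm : e*t2 - f*r2 - 1 ∈ J) (hn : f*p2 - e*q2 ∈ J)
    (hu : k*t2 - l*r2 ∈ J) (hw : l*p2 - k*q2 - 1 ∈ J) :
    (e*t2 - f*r2 - 1) + (l*p2 - k*q2 - 1) = 0 := by
  have hd : (e*t2 - f*r2)*(l*p2 - k*q2) - (f*p2 - e*q2)*(k*t2 - l*r2) = 1 := by
    linear_combination (p2*t2 - q2*r2)*hdeth + hsdeth
  have hz1 := hJJ _ hm _ hw
  have hz2 := hJJ _ hn _ hu
  linear_combination hd - hz1 + hz2

lemma core_identity
    (hJJ : ∀ x ∈ J, ∀ y ∈ J, x*y = (0:A)) (h01 : (0:A) ≠ 1) (h2 : (2:A) = 0)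
    (a b c d e f k l p1 q1 r1 t1 p2 q2 r2 t2 : A)
    (hp : p1 = 0 ∨ p1 = 1) (hq : q1 = 0 ∨ q1 = 1)
    (hr : r1 = 0 ∨ r1 = 1) (ht : t1 = 0 ∨ t1 = 1)
    (hdeth : e*l - f*k = 1)
    (hsdetg : p1*t1 - q1*r1 = 1) (hsdeth : p2*t2 - q2*r2 = 1)
    (hA : a - p1 ∈ J) (hB : b - q1 ∈ J) (hC : c - r1 ∈ J) (hD : d - t1 ∈ J)
    (hE : e - p2 ∈ J) (hF : f - q2 ∈ J) (hK : k - r2 ∈ J) (hL : l - t2 ∈ J) :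
    ((a*e+b*k)*(r1*q2+t1*t2) - (a*f+b*l)*(r1*p2+t1*r2) - 1)
      + ((a*f+b*l)*(p1*p2+q1*r2) - (a*e+b*k)*(p1*q2+q1*t2))
      + ((c*e+d*k)*(r1*q2+t1*t2) - (c*f+d*l)*(r1*p2+t1*r2))
    = ((a*t1 - b*r1 - 1) + (b*p1 - a*q1) + (c*t1 - d*r1))
      + ((e*t2 - f*r2 - 1) + (f*p2 - e*q2) + (k*t2 - l*r2)) := by
  have hm : e*t2 - f*r2 - 1 ∈ J := by
    have hh : e*t2 - f*r2 - 1 = (e - p2)*t2 - (f - q2)*r2 := by linear_combination hsdeth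
    rw [hh]; exact J.sub_mem (J.mul_mem_right _ hE) (J.mul_mem_right _ hF)
  have hn : f*p2 - e*q2 ∈ J := by
    have hh : f*p2 - e*q2 = (f - q2)*p2 - (e - p2)*q2 := by ring
    rw [hh]; exact J.sub_mem (J.mul_mem_right _ hF) (J.mul_mem_right _ hE)
  have hu : k*t2 - l*r2 ∈ J := by
    have hh : k*t2 - l*r2 = (k - r2)*t2 - (l - t2)*r2 := by ring
    rw [hh]; exact J.sub_mem (J.mul_mem_right _ hK) (J.mul_mem_right _ hL)
  have hw : l*p2 - k*q2 - 1 ∈ J := by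
    have hh : l*p2 - k*q2 - 1 = (l - t2)*p2 - (k - r2)*q2 := by linear_combination hsdeth
    rw [hh]; exact J.sub_mem (J.mul_mem_right _ hL) (J.mul_mem_right _ hK)
  have hM00 : a*t1 - b*r1 - 1 ∈ J := by
    have hh : a*t1 - b*r1 - 1 = (a - p1)*t1 - (b - q1)*r1 := by linear_combination hsdetg
    rw [hh]; exact J.sub_mem (J.mul_mem_right _ hA) (J.mul_mem_right _ hB)
  have hM01 : b*p1 - a*q1 ∈ J := by
    have hh : b*p1 - a*q1 = (b - q1)*p1 - (a - p1)*q1 := by ring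
    rw [hh]; exact J.sub_mem (J.mul_mem_right _ hB) (J.mul_mem_right _ hA)
  have hM10 : c*t1 - d*r1 ∈ J := by
    have hh : c*t1 - d*r1 = (c - r1)*t1 - (d - t1)*r1 := by ring
    rw [hh]; exact J.sub_mem (J.mul_mem_right _ hC) (J.mul_mem_right _ hD)
  have hM11 : d*p1 - c*q1 - 1 ∈ J := by
    have hh : d*p1 - c*q1 - 1 = (d - t1)*p1 - (c - r1)*q1 := by linear_combination hsdetg
    rw [hh]; exact J.sub_mem (J.mul_mem_right _ hD) (J.mul_mem_right _ hC)
  have hC00 : p1*t1*(e*t2 - f*r2 - 1) + q1*t1*(k*t2 - l*r2)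
      - p1*r1*(f*p2 - e*q2) - q1*r1*(l*p2 - k*q2 - 1) ∈ J :=
    J.sub_mem (J.sub_mem (J.add_mem (J.mul_mem_left _ hm) (J.mul_mem_left _ hu))
      (J.mul_mem_left _ hn)) (J.mul_mem_left _ hw)
  have hC01 : p1*p1*(f*p2 - e*q2) + p1*q1*(l*p2 - k*q2 - 1)
      - p1*q1*(e*t2 - f*r2 - 1) - q1*q1*(k*t2 - l*r2) ∈ J :=
    J.sub_mem (J.sub_mem (J.add_mem (J.mul_mem_left _ hn) (J.mul_mem_left _ hw))
      (J.mul_mem_left _ hm)) (J.mul_mem_left _ hu)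
  have hC10 : r1*t1*(e*t2 - f*r2 - 1) + t1*t1*(k*t2 - l*r2)
      - r1*r1*(f*p2 - e*q2) - r1*t1*(l*p2 - k*q2 - 1) ∈ J :=
    J.sub_mem (J.sub_mem (J.add_mem (J.mul_mem_left _ hm) (J.mul_mem_left _ hu))
      (J.mul_mem_left _ hn)) (J.mul_mem_left _ hw)
  have hC11 : p1*r1*(f*p2 - e*q2) + p1*t1*(l*p2 - k*q2 - 1)
      - q1*r1*(e*t2 - f*r2 - 1) - q1*t1*(k*t2 - l*r2) ∈ J :=
    J.sub_mem (J.sub_mem (J.add_mem (J.mul_mem_left _ hn) (J.mul_mem_left _ hw))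
      (J.mul_mem_left _ hm)) (J.mul_mem_left _ hu)
  have hP1 := hJJ _ hM00 _ hC00
  have hP2 := hJJ _ hM01 _ hC10
  have hP3 := hJJ _ hM00 _ hC01
  have hP4 := hJJ _ hM01 _ hC11
  have hP5 := hJJ _ hM10 _ hC00
  have hP6 := hJJ _ hM11 _ hC10
  have htr : (e*t2 - f*r2 - 1) + (l*p2 - k*q2 - 1) = 0 :=
    trace_zero hJJ hdeth hsdeth hm hn hu hw
  have hinv := inv_sum (m := e*t2 - f*r2 - 1) (n := f*p2 - e*q2)
    (u := k*t2 - l*r2) (w := l*p2 - k*q2 - 1) h01 h2 hp hq hr ht hsdetg htr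
  linear_combination
    (- d*r1 + d*l*t1*r2 + d*l*r1*p2 - d*k*t1*t2 - d*k*r1*q2 + c*t1 + c*f*t1*r2
      + c*f*r1*p2 - c*e*t1*t2 - c*e*r1*q2 - b*r1 + b*p1 + b*l*t1*r2 + b*l*r1*p2
      - b*l*q1*r2 - b*l*p1*p2 - b*k*t1*t2 - b*k*r1*q2 + b*k*q1*t2 + b*k*p1*q2
      + a*t1 - a*q1 + a*f*t1*r2 + a*f*r1*p2 - a*f*q1*r2 - a*f*p1*p2 - a*e*t1*t2
      - a*e*r1*q2 + a*e*q1*t2 + a*e*p1*q2) * hsdetg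
    + hP1 + hP2 + hP3 + hP4 + hP5 + hP6 + hinv

/-- The quasi-character `Fval` of a 2×2 matrix. -/
noncomputable def Fval (J : Ideal A) (g : Matrix (Fin 2) (Fin 2) A) : A :=
  (g 0 0 * theta J (g 1 1) - g 0 1 * theta J (g 1 0) - 1)
    + (g 0 1 * theta J (g 0 0) - g 0 0 * theta J (g 0 1))
    + (g 1 0 * theta J (g 1 1) - g 1 1 * theta J (g 1 0))

lemma sdet_of (h1 : (1:A) ∉ J) (h2 : (2:A) = 0)
    (hJ01 : ∀ x : A, x ∈ J ∨ x - 1 ∈ J) {a b c d : A} (hdet : a*d - b*c = 1) :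
    theta J a * theta J d - theta J b * theta J c = 1 := by
  have h := congrArg (theta J) hdet
  rwa [theta_sub h1 h2 hJ01, theta_mul h1 hJ01, theta_mul h1 hJ01, theta_one h1] at h

lemma Fval_mem (h1 : (1:A) ∉ J) (h2 : (2:A) = 0)
    (hJ01 : ∀ x : A, x ∈ J ∨ x - 1 ∈ J) (g : SL2 A) :
    Fval J (g : Matrix (Fin 2) (Fin 2) A) ∈ J := by
  have hdet : (g : Matrix (Fin 2) (Fin 2) A) 0 0 * (g : Matrix (Fin 2) (Fin 2) A) 1 1
      - (g : Matrix (Fin 2) (Fin 2) A) 0 1 * (g : Matrix (Fin 2) (Fin 2) A) 1 0 = 1 := by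
    have := g.prop; rwa [Matrix.det_fin_two] at this
  set a := (g : Matrix (Fin 2) (Fin 2) A) 0 0
  set b := (g : Matrix (Fin 2) (Fin 2) A) 0 1
  set c := (g : Matrix (Fin 2) (Fin 2) A) 1 0
  set d := (g : Matrix (Fin 2) (Fin 2) A) 1 1
  have hsdet := sdet_of h1 h2 hJ01 hdet
  have key : Fval J (g : Matrix (Fin 2) (Fin 2) A)
      = ((a - theta J a) * theta J d - (b - theta J b) * theta J c)
        + ((b - theta J b) * theta J a - (a - theta J a) * theta J b)
        + ((c - theta J c) * theta J d - (d - theta J d) * theta J c) := by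
    unfold Fval
    linear_combination hsdet
  rw [key]
  have hA := theta_sub_mem hJ01 a
  have hB := theta_sub_mem hJ01 b
  have hC := theta_sub_mem hJ01 c
  have hD := theta_sub_mem hJ01 d
  exact J.add_mem (J.add_mem
    (J.sub_mem (J.mul_mem_right _ hA) (J.mul_mem_right _ hB))
    (J.sub_mem (J.mul_mem_right _ hB) (J.mul_mem_right _ hA)))
    (J.sub_mem (J.mul_mem_right _ hC) (J.mul_mem_right _ hD))

lemma Fval_mul (hJJ : ∀ x ∈ J, ∀ y ∈ J, x*y = (0:A)) (h1 : (1:A) ∉ J)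
    (h2 : (2:A) = 0) (hJ01 : ∀ x : A, x ∈ J ∨ x - 1 ∈ J) (g h : SL2 A) :
    Fval J ((g * h : SL2 A) : Matrix (Fin 2) (Fin 2) A)
      = Fval J (g : Matrix (Fin 2) (Fin 2) A) + Fval J (h : Matrix (Fin 2) (Fin 2) A) := by
  have h01 : (0:A) ≠ 1 := fun hh => h1 (hh ▸ J.zero_mem)
  have hdetg : (g : Matrix (Fin 2) (Fin 2) A) 0 0 * (g : Matrix (Fin 2) (Fin 2) A) 1 1
      - (g : Matrix (Fin 2) (Fin 2) A) 0 1 * (g : Matrix (Fin 2) (Fin 2) A) 1 0 = 1 := by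
    have := g.prop; rwa [Matrix.det_fin_two] at this
  have hdeth : (h : Matrix (Fin 2) (Fin 2) A) 0 0 * (h : Matrix (Fin 2) (Fin 2) A) 1 1
      - (h : Matrix (Fin 2) (Fin 2) A) 0 1 * (h : Matrix (Fin 2) (Fin 2) A) 1 0 = 1 := by
    have := h.prop; rwa [Matrix.det_fin_two] at this
  have e00 : ((g * h : SL2 A) : Matrix (Fin 2) (Fin 2) A) 0 0
      = (g : Matrix (Fin 2) (Fin 2) A) 0 0 * (h : Matrix (Fin 2) (Fin 2) A) 0 0
        + (g : Matrix (Fin 2) (Fin 2) A) 0 1 * (h : Matrix (Fin 2) (Fin 2) A) 1 0 := by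
    rw [Matrix.SpecialLinearGroup.coe_mul, Matrix.mul_apply, Fin.sum_univ_two]
  have e01 : ((g * h : SL2 A) : Matrix (Fin 2) (Fin 2) A) 0 1
      = (g : Matrix (Fin 2) (Fin 2) A) 0 0 * (h : Matrix (Fin 2) (Fin 2) A) 0 1
        + (g : Matrix (Fin 2) (Fin 2) A) 0 1 * (h : Matrix (Fin 2) (Fin 2) A) 1 1 := by
    rw [Matrix.SpecialLinearGroup.coe_mul, Matrix.mul_apply, Fin.sum_univ_two]
  have e10 : ((g * h : SL2 A) : Matrix (Fin 2) (Fin 2) A) 1 0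
      = (g : Matrix (Fin 2) (Fin 2) A) 1 0 * (h : Matrix (Fin 2) (Fin 2) A) 0 0
        + (g : Matrix (Fin 2) (Fin 2) A) 1 1 * (h : Matrix (Fin 2) (Fin 2) A) 1 0 := by
    rw [Matrix.SpecialLinearGroup.coe_mul, Matrix.mul_apply, Fin.sum_univ_two]
  have e11 : ((g * h : SL2 A) : Matrix (Fin 2) (Fin 2) A) 1 1
      = (g : Matrix (Fin 2) (Fin 2) A) 1 0 * (h : Matrix (Fin 2) (Fin 2) A) 0 1
        + (g : Matrix (Fin 2) (Fin 2) A) 1 1 * (h : Matrix (Fin 2) (Fin 2) A) 1 1 := by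
    rw [Matrix.SpecialLinearGroup.coe_mul, Matrix.mul_apply, Fin.sum_univ_two]
  have hsdetg := sdet_of h1 h2 hJ01 hdetg
  have hsdeth := sdet_of h1 h2 hJ01 hdeth
  unfold Fval
  rw [e00, e01, e10, e11]
  simp only [theta_add h1 h2 hJ01, theta_mul h1 hJ01]
  exact core_identity hJJ h01 h2 _ _ _ _ _ _ _ _ _ _ _ _ _ _ _ _
    (theta01 J _) (theta01 J _) (theta01 J _) (theta01 J _)
    hdeth hsdetg hsdeth
    (theta_sub_mem hJ01 _) (theta_sub_mem hJ01 _) (theta_sub_mem hJ01 _)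
    (theta_sub_mem hJ01 _) (theta_sub_mem hJ01 _) (theta_sub_mem hJ01 _)
    (theta_sub_mem hJ01 _) (theta_sub_mem hJ01 _)

end Aux

set_option synthInstance.maxHeartbeats 1000000 in
set_option maxHeartbeats 2000000 in
theorem ramified_abelianization_hom
    (K : Type*) [Field K] [NumberField K]
    (S : Finset (Ideal (NumberField.RingOfIntegers K)))
    (R : Subring K) (hR : IsSIntegers K S R)
    (P : Ideal ↥R) (hPp : P.IsPrime) (hPr : P ^ 2 ∣ Ideal.span {(2 : ↥R)})
    (hPc : Nat.card (↥R ⧸ P) = 2) :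
    ∃ q : SL2 (↥R ⧸ P ^ 2) →*
        Multiplicative ↥(P.map (Ideal.Quotient.mk (P ^ 2))),
      (∀ A : SL2 (↥R ⧸ P ^ 2),
        A.1 0 0 - 1 ∈ P.map (Ideal.Quotient.mk (P ^ 2)) →
        A.1 1 1 - 1 ∈ P.map (Ideal.Quotient.mk (P ^ 2)) →
        A.1 0 1 ∈ P.map (Ideal.Quotient.mk (P ^ 2)) →
        A.1 1 0 ∈ P.map (Ideal.Quotient.mk (P ^ 2)) →
          ((Multiplicative.toAdd (q A) : ↥(P.map (Ideal.Quotient.mk (P ^ 2)))) : ↥R ⧸ P ^ 2)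
            = A.1 0 0 - 1 + A.1 0 1 + A.1 1 0) ∧
      (∀ A : SL2 (↥R ⧸ P ^ 2), (∀ i j, A.1 i j = 0 ∨ A.1 i j = 1) → q A = 1) := by
  classical
  set J : Ideal (↥R ⧸ P ^ 2) := P.map (Ideal.Quotient.mk (P ^ 2)) with hJdef
  have h2m : (2 : ↥R) ∈ P ^ 2 := by
    obtain ⟨C, hC⟩ := hPr
    have h := Ideal.mem_span_singleton_self (2 : ↥R)
    rw [hC] at h
    exact Ideal.mul_le_left h
  have h2A : (2 : ↥R ⧸ P ^ 2) = 0 := by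
    have hcast : (2 : ↥R ⧸ P ^ 2) = Ideal.Quotient.mk (P ^ 2) 2 :=
      (map_ofNat (Ideal.Quotient.mk (P ^ 2)) 2).symm
    rw [hcast, Ideal.Quotient.eq_zero_iff_mem]
    exact h2m
  have h1J : (1 : ↥R ⧸ P ^ 2) ∉ J := by
    intro hmem
    obtain ⟨x, hxP, hx1⟩ :=
      (Ideal.mem_map_iff_of_surjective _ Ideal.Quotient.mk_surjective).mp hmem
    have hx1' : x - 1 ∈ P ^ 2 := Ideal.Quotient.eq.mp (by rw [hx1, _root_.map_one])
    have hx1P : x - 1 ∈ P := Ideal.pow_le_self (two_ne_zero) hx1'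
    have hone : (1 : ↥R) ∈ P := by
      have := P.sub_mem hxP hx1P
      simpa using this
    exact hPp.ne_top ((Ideal.eq_top_iff_one P).mpr hone)
  have hz : ∀ y : ↥R ⧸ P, y = 0 ∨ y = 1 := by
    obtain ⟨x, y, hxy, hung⟩ := Nat.card_eq_two_iff.mp hPc
    haveI : Nontrivial (↥R ⧸ P) := ⟨⟨x, y, hxy⟩⟩
    have hmem : ∀ w : ↥R ⧸ P, w = x ∨ w = y := by
      intro w
      have : w ∈ ({x, y} : Set (↥R ⧸ P)) := by rw [hung]; trivial
      simpa using this
    intro z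
    by_cases h0 : z = 0
    · exact Or.inl h0
    · right
      rcases hmem z with hzx | hzy
      · rcases hmem 0 with h0x | h0y
        · exact absurd (hzx.trans h0x.symm) h0
        · rcases hmem 1 with h1x | h1y
          · exact hzx.trans h1x.symm
          · exact absurd (h0y.trans h1y.symm) zero_ne_one
      · rcases hmem 0 with h0x | h0y
        · rcases hmem 1 with h1x | h1y
          · exact absurd (h0x.trans h1x.symm) zero_ne_one
          · exact hzy.trans h1y.symm
        · exact absurd (hzy.trans h0y.symm) h0
  have hJ01 : ∀ x : ↥R ⧸ P ^ 2, x ∈ J ∨ x - 1 ∈ J := by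
    intro x
    obtain ⟨r, rfl⟩ := Ideal.Quotient.mk_surjective x
    rcases hz (Ideal.Quotient.mk P r) with h | h
    · left
      exact Ideal.mem_map_of_mem _ (Ideal.Quotient.eq_zero_iff_mem.mp h)
    · right
      have hr : r - 1 ∈ P := Ideal.Quotient.eq.mp (by rw [h, _root_.map_one])
      have hrw : Ideal.Quotient.mk (P ^ 2) r - 1 = Ideal.Quotient.mk (P ^ 2) (r - 1) := by
        rw [map_sub, _root_.map_one]
      rw [hrw]
      exact Ideal.mem_map_of_mem _ hr
  have hJJ : ∀ x ∈ J, ∀ y ∈ J, x * y = (0 : ↥R ⧸ P ^ 2) := by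
    intro x hx y hy
    have hmul : x * y ∈ J * J := Ideal.mul_mem_mul hx hy
    have hbot : J * J = ⊥ := by
      rw [hJdef, ← Ideal.map_mul, ← pow_two, Ideal.map_quotient_self]
    rw [hbot] at hmul
    exact Ideal.mem_bot.mp hmul
  refine ⟨MonoidHom.mk'
      (fun g : SL2 (↥R ⧸ P ^ 2) => Multiplicative.ofAdd
        (⟨Fval J (g : Matrix (Fin 2) (Fin 2) (↥R ⧸ P ^ 2)), Fval_mem h1J h2A hJ01 g⟩ : J))
      (fun g h => by
        rw [← ofAdd_add]
        exact congrArg Multiplicative.ofAdd (Subtype.ext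
          (by simpa using Fval_mul hJJ h1J h2A hJ01 g h))), ?_, ?_⟩
  · intro A0 hA00 hA11 hA01 hA10
    show Fval J (A0 : Matrix (Fin 2) (Fin 2) (↥R ⧸ P ^ 2))
      = A0.1 0 0 - 1 + A0.1 0 1 + A0.1 1 0
    have ha : theta J (A0.1 0 0) = 1 := theta_of_not_mem (not_mem_of_sub_one_mem h1J hA00)
    have hd : theta J (A0.1 1 1) = 1 := theta_of_not_mem (not_mem_of_sub_one_mem h1J hA11)
    have hb : theta J (A0.1 0 1) = 0 := theta_of_mem hA01
    have hc : theta J (A0.1 1 0) = 0 := theta_of_mem hA10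
    unfold Fval
    rw [ha, hb, hc, hd]
    ring
  · intro A0 hA0
    have hdet : A0.1 0 0 * A0.1 1 1 - A0.1 0 1 * A0.1 1 0 = 1 := by
      have := A0.prop
      rwa [Matrix.det_fin_two] at this
    have hth : ∀ i j, theta J (A0.1 i j) = A0.1 i j := by
      intro i j
      rcases hA0 i j with h | h <;> rw [h]
      · exact theta_zero
      · exact theta_one h1J
    show Multiplicative.ofAdd _ = Multiplicative.ofAdd (0 : ↥J)
    refine congrArg Multiplicative.ofAdd (Subtype.ext ?_)
    show Fval J (A0 : Matrix (Fin 2) (Fin 2) (↥R ⧸ P ^ 2)) = ((0 : ↥J) : ↥R ⧸ P ^ 2)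
    rw [ZeroMemClass.coe_zero]
    unfold Fval
    rw [hth 0 0, hth 0 1, hth 1 0, hth 1 1]
    linear_combination hdet
end
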